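/- Let k ∈ ℕ, k ≥ 2. Suppose P_k and q_k are algebraic polynomials of degree at most k with P_k(u) ≤ Φ(u) ≤ q_k(u) for all u ∈ [−1, 1], and suppose ρ : [0,1] → ℝ has the form ρ(x) = ρ(0) + ∫₀ˣ g(t) dt with g integrable. Then for every x ∈ [0,1], |ρ(x) − M_k(ρ, x)| ≤ ∫₀¹ (q_k − P_k)(x − t) |g(t)| dt and |ρ(x) − N_k(ρ, x)| ≤ ∫₀¹ (q_k − P_k)(x − t) |g(t)| dt. (Pointwise estimate from the proof of Lemma 3.4.) -/

import Mathlib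

open MeasureTheory Set Real

/-- Local modulus of continuity of `ρ` at `x` with radius `δ`, relative to `[0,1]`. -/
noncomputable def omegaMod (ρ : ℝ → ℝ) (x δ : ℝ) : ℝ :=
  sSup {d : ℝ | ∃ u ∈ Icc (x - δ) (x + δ) ∩ Icc (0:ℝ) 1,
    ∃ v ∈ Icc (x - δ) (x + δ) ∩ Icc (0:ℝ) 1, d = |ρ u - ρ v|}

/-- One-sided operator `G_y`. -/
noncomputable def Gop (y : ℝ) (ρ : ℝ → ℝ) (x : ℝ) : ℝ :=
  ∫ t in (0:ℝ)..1, (ρ ((1 - y) * x + y * t) - omegaMod ρ ((1 - y) * x + y * t) y)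

/-- One-sided operator `H_y`. -/
noncomputable def Hop (y : ℝ) (ρ : ℝ → ℝ) (x : ℝ) : ℝ :=
  ∫ t in (0:ℝ)..1, (ρ ((1 - y) * x + y * t) + omegaMod ρ ((1 - y) * x + y * t) y)

/-- `L^p` norm on `[0,1]`. -/
noncomputable def lpNorm (p : ℝ) (f : ℝ → ℝ) : ℝ :=
  (∫ x in (0:ℝ)..1, |f x| ^ p) ^ (1 / p)

/-- Averaged modulus of smoothness `τ(ρ, δ)_p`. -/
noncomputable def tau (p : ℝ) (ρ : ℝ → ℝ) (δ : ℝ) : ℝ :=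
  lpNorm p (fun x => omegaMod ρ x δ)

/-- The step function `Φ`. -/
noncomputable def stepPhi (x : ℝ) : ℝ := if 0 < x then 1 else 0

/-- Operator `M_k` built from polynomials `P ≤ Φ ≤ Q`, applied to `f` with
`f x = f 0 + ∫_0^x g`. -/
noncomputable def Mop (P Q : Polynomial ℝ) (f0 : ℝ) (g : ℝ → ℝ) (x : ℝ) : ℝ :=
  f0 + (∫ t in (0:ℝ)..1, P.eval (x - t) * max (g t) 0)
     - ∫ t in (0:ℝ)..1, Q.eval (x - t) * max (-g t) 0

/-- Operator `N_k` built from polynomials `P ≤ Φ ≤ Q`, applied to `f` with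
`f x = f 0 + ∫_0^x g`. -/
noncomputable def Nop (P Q : Polynomial ℝ) (f0 : ℝ) (g : ℝ → ℝ) (x : ℝ) : ℝ :=
  f0 + (∫ t in (0:ℝ)..1, Q.eval (x - t) * max (g t) 0)
     - ∫ t in (0:ℝ)..1, P.eval (x - t) * max (-g t) 0

/-- Degree of best one-sided approximation by polynomials of degree at most `k`. -/
noncomputable def bestE (p : ℝ) (k : ℕ) (ρ : ℝ → ℝ) : ℝ :=
  sInf {c : ℝ | ∃ P Q : Polynomial ℝ, P.natDegree ≤ k ∧ Q.natDegree ≤ k ∧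
    (∀ x ∈ Icc (0:ℝ) 1, P.eval x ≤ ρ x ∧ ρ x ≤ Q.eval x) ∧
    c = lpNorm p (fun x => Q.eval x - P.eval x)}

/-- Pointwise estimate from the proof of Lemma 3.4. -/
theorem stmt4 (k : ℕ) (hk : 2 ≤ k) (P Q : Polynomial ℝ)
    (hPdeg : P.natDegree ≤ k) (hQdeg : Q.natDegree ≤ k)
    (hPQ : ∀ u ∈ Icc (-1:ℝ) 1, P.eval u ≤ stepPhi u ∧ stepPhi u ≤ Q.eval u)
    (ρ g : ℝ → ℝ) (hg : IntervalIntegrable g volume 0 1)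
    (hρ : ∀ x ∈ Icc (0:ℝ) 1, ρ x = ρ 0 + ∫ t in (0:ℝ)..x, g t) :
    ∀ x ∈ Icc (0:ℝ) 1,
      |ρ x - Mop P Q (ρ 0) g x| ≤
        (∫ t in (0:ℝ)..1, (Q.eval (x - t) - P.eval (x - t)) * |g t|) ∧
      |ρ x - Nop P Q (ρ 0) g x| ≤
        ∫ t in (0:ℝ)..1, (Q.eval (x - t) - P.eval (x - t)) * |g t| := by
  intro x hx
  obtain ⟨hx0, hx1⟩ := hx
  -- a.e. t ≠ x
  have hxne : ∀ᵐ t : ℝ, t ≠ x := by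
    rw [MeasureTheory.ae_iff]
    simpa [Classical.not_not] using (measure_singleton x : volume {x} = 0)
  set A : ℝ → ℝ := fun t => stepPhi (x - t) * g t with hA_def
  -- integrability of A on [0,x] and [x,1]
  have hsub : Set.uIcc (0:ℝ) x ⊆ Set.uIcc (0:ℝ) 1 := by
    rw [uIcc_of_le hx0, uIcc_of_le (by norm_num : (0:ℝ) ≤ 1)]
    exact Icc_subset_Icc le_rfl hx1
  have hA1 : IntervalIntegrable A volume 0 x := by
    refine (hg.mono_set hsub).congr_ae ?_
    filter_upwards [ae_restrict_of_ae hxne, ae_restrict_mem measurableSet_uIoc]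
      with t htne ht
    rw [uIoc_of_le hx0] at ht
    have ht' : t < x := lt_of_le_of_ne ht.2 htne
    simp [hA_def, stepPhi, sub_pos, ht']
  have hA2 : IntervalIntegrable A volume x 1 := by
    refine (intervalIntegrable_const (c := (0:ℝ))).congr_ae ?_
    filter_upwards [ae_restrict_mem measurableSet_uIoc] with t ht
    rw [uIoc_of_le hx1] at ht
    have ht' : ¬ t < x := by push_neg; linarith [ht.1]
    simp [hA_def, stepPhi, sub_pos, ht']
  have hA : IntervalIntegrable A volume 0 1 := hA1.trans hA2
  -- value of ∫ A
  have hv1 : (∫ t in (0:ℝ)..x, A t) = ∫ t in (0:ℝ)..x, g t := by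
    refine intervalIntegral.integral_congr_ae ?_
    filter_upwards [hxne] with t htne ht
    rw [uIoc_of_le hx0] at ht
    have ht' : t < x := lt_of_le_of_ne ht.2 htne
    simp [hA_def, stepPhi, sub_pos, ht']
  have hv2 : (∫ t in x..(1:ℝ), A t) = 0 := by
    rw [← intervalIntegral.integral_zero (a := x) (b := (1:ℝ)) (μ := volume)]
    refine intervalIntegral.integral_congr_ae ?_
    filter_upwards with t ht
    rw [uIoc_of_le hx1] at ht
    have ht' : ¬ t < x := by push_neg; linarith [ht.1]
    simp [hA_def, stepPhi, sub_pos, ht']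
  have hρx : ρ x = ρ 0 + ∫ t in (0:ℝ)..1, A t := by
    rw [hρ x ⟨hx0, hx1⟩, ← intervalIntegral.integral_add_adjacent_intervals hA1 hA2,
      hv1, hv2, add_zero]
  -- integrability of positive/negative parts
  have hgp : IntervalIntegrable (fun t => max (g t) 0) volume 0 1 := by
    have : (fun t => max (g t) 0) = fun t => (g t + |g t|) / 2 := by
      funext t
      rcases le_total 0 (g t) with h | h
      · rw [max_eq_left h, abs_of_nonneg h]; ring
      · rw [max_eq_right h, abs_of_nonpos h]; ring
    rw [this]
    exact (hg.add hg.abs).div_const 2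
  have hgm : IntervalIntegrable (fun t => max (-g t) 0) volume 0 1 := by
    have : (fun t => max (-g t) 0) = fun t => (|g t| - g t) / 2 := by
      funext t
      rcases le_total 0 (g t) with h | h
      · rw [max_eq_right (by linarith), abs_of_nonneg h]; ring
      · rw [max_eq_left (by linarith), abs_of_nonpos h]; ring
    rw [this]
    exact (hg.abs.sub hg).div_const 2
  have hcP : ContinuousOn (fun t : ℝ => P.eval (x - t)) (Set.uIcc (0:ℝ) 1) :=
    (P.continuous_aeval.comp (continuous_const.sub continuous_id)).continuousOn
  have hcQ : ContinuousOn (fun t : ℝ => Q.eval (x - t)) (Set.uIcc (0:ℝ) 1) :=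
    (Q.continuous_aeval.comp (continuous_const.sub continuous_id)).continuousOn
  have hPp : IntervalIntegrable (fun t => P.eval (x - t) * max (g t) 0) volume 0 1 :=
    hgp.continuousOn_mul hcP
  have hPm : IntervalIntegrable (fun t => P.eval (x - t) * max (-g t) 0) volume 0 1 :=
    hgm.continuousOn_mul hcP
  have hQp : IntervalIntegrable (fun t => Q.eval (x - t) * max (g t) 0) volume 0 1 :=
    hgp.continuousOn_mul hcQ
  have hQm : IntervalIntegrable (fun t => Q.eval (x - t) * max (-g t) 0) volume 0 1 :=
    hgm.continuousOn_mul hcQ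
  have hb : IntervalIntegrable (fun t => (Q.eval (x - t) - P.eval (x - t)) * |g t|)
      volume 0 1 :=
    hg.abs.continuousOn_mul (hcQ.sub hcP)
  -- bounds on stepPhi at x - t
  have hstep : ∀ t ∈ Icc (0:ℝ) 1, P.eval (x - t) ≤ stepPhi (x - t) ∧
      stepPhi (x - t) ≤ Q.eval (x - t) := fun t ht =>
    hPQ (x - t) ⟨by linarith [ht.2], by linarith [ht.1]⟩
  constructor
  · -- M bound
    have hM : ρ x - Mop P Q (ρ 0) g x =
        ∫ t in (0:ℝ)..1, (A t - P.eval (x - t) * max (g t) 0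
          + Q.eval (x - t) * max (-g t) 0) := by
      rw [hρx, Mop, intervalIntegral.integral_add (hA.sub hPp) hQm,
        intervalIntegral.integral_sub hA hPp]
      ring
    rw [hM]
    calc |∫ t in (0:ℝ)..1, (A t - P.eval (x - t) * max (g t) 0
          + Q.eval (x - t) * max (-g t) 0)|
        ≤ ∫ t in (0:ℝ)..1, |A t - P.eval (x - t) * max (g t) 0
          + Q.eval (x - t) * max (-g t) 0| :=
          intervalIntegral.abs_integral_le_integral_abs zero_le_one
      _ ≤ ∫ t in (0:ℝ)..1, (Q.eval (x - t) - P.eval (x - t)) * |g t| := by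
          refine intervalIntegral.integral_mono_on zero_le_one
            ((hA.sub hPp).add hQm).abs hb ?_
          intro t ht
          obtain ⟨h1, h2⟩ := hstep t ht
          have hA' : A t = stepPhi (x - t) * g t := rfl
          rcases le_total 0 (g t) with hgt | hgt
          · rw [hA', max_eq_left hgt, max_eq_right (by linarith), abs_of_nonneg hgt,
              mul_zero, add_zero]
            rw [abs_of_nonneg (by nlinarith)]
            nlinarith
          · rw [hA', max_eq_right hgt, max_eq_left (by linarith), abs_of_nonpos hgt,
              mul_zero, sub_zero]
            rw [abs_of_nonneg (by nlinarith)]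
            nlinarith
  · -- N bound
    have hN : ρ x - Nop P Q (ρ 0) g x =
        ∫ t in (0:ℝ)..1, (A t - Q.eval (x - t) * max (g t) 0
          + P.eval (x - t) * max (-g t) 0) := by
      rw [hρx, Nop, intervalIntegral.integral_add (hA.sub hQp) hPm,
        intervalIntegral.integral_sub hA hQp]
      ring
    rw [hN]
    calc |∫ t in (0:ℝ)..1, (A t - Q.eval (x - t) * max (g t) 0
          + P.eval (x - t) * max (-g t) 0)|
        ≤ ∫ t in (0:ℝ)..1, |A t - Q.eval (x - t) * max (g t) 0
          + P.eval (x - t) * max (-g t) 0| :=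
          intervalIntegral.abs_integral_le_integral_abs zero_le_one
      _ ≤ ∫ t in (0:ℝ)..1, (Q.eval (x - t) - P.eval (x - t)) * |g t| := by
          refine intervalIntegral.integral_mono_on zero_le_one
            ((hA.sub hQp).add hPm).abs hb ?_
          intro t ht
          obtain ⟨h1, h2⟩ := hstep t ht
          have hA' : A t = stepPhi (x - t) * g t := rfl
          rcases le_total 0 (g t) with hgt | hgt
          · rw [hA', max_eq_left hgt, max_eq_right (by linarith), abs_of_nonneg hgt,
              mul_zero, add_zero]
            rw [abs_of_nonpos (by nlinarith)]
            nlinarith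
          · rw [hA', max_eq_right hgt, max_eq_left (by linarith), abs_of_nonpos hgt,
              mul_zero, sub_zero]
            rw [abs_of_nonpos (by nlinarith)]
            nlinarith
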